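/- For every positive integer x, ∑_{n=1}^{x} M(⌊x/n⌋)·(⌊n/2⌋ − 2⌊n/4⌋) equals n_x − m_x, where m_x is the number of fractions in the Farey sequence of order x that are ≤ 1/4 and n_x the number of Farey fractions in (1/4, 1/2]. -/

import Mathlib

open Finset ArithmeticFunction
open scoped ArithmeticFunction.Moebius

/-- Mertens function `M(k) = ∑_{i=1}^{k} μ(i)`. -/
def Mertens (k : ℕ) : ℤ := ∑ i ∈ Finset.Icc 1 k, ArithmeticFunction.moebius i

/-- Number of fractions `a/b` in the Farey sequence of order `x` (irreducible,
`1 ≤ a ≤ b ≤ x`, so excluding `0`) that are `≤ ξ`. -/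
noncomputable def fareyCount (x : ℕ) (ξ : ℝ) : ℕ :=
  ((Finset.Icc 1 x ×ˢ Finset.Icc 1 x).filter
    (fun p => p.1 ≤ p.2 ∧ Nat.gcd p.1 p.2 = 1 ∧ (p.1 : ℝ) ≤ ξ * p.2)).card

/-- count of `a ∈ [1, b/k]` coprime to `b` -/
def tcount (k b : ℕ) : ℕ :=
  ((Finset.Icc 1 (b / k)).filter (fun a => Nat.gcd a b = 1)).card

lemma sum_tcount (k : ℕ) (hk : 0 < k) (b : ℕ) (hb : 0 < b) :
    ∑ d ∈ b.divisors, tcount k d = b / k := by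
  rw [← Nat.sum_div_divisors b (tcount k)]
  have h1 : (Finset.Icc 1 (b / k)).card = b / k := by simp
  rw [← h1]
  rw [Finset.card_eq_sum_card_fiberwise (f := fun a => Nat.gcd a b) (t := b.divisors)
    (fun a ha => Nat.mem_divisors.2 ⟨Nat.gcd_dvd_right a b, hb.ne'⟩)]
  apply Finset.sum_congr rfl
  intro d hd
  obtain ⟨hdvd, -⟩ := Nat.mem_divisors.1 hd
  have hd0 : 0 < d := Nat.pos_of_dvd_of_pos hdvd hb
  have hb' : b = d * (b / d) := (Nat.mul_div_cancel' hdvd).symm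
  unfold tcount
  apply Finset.card_bij' (fun a' _ => d * a') (fun a _ => a / d)
  · rintro a' ha'
    simp only [Finset.mem_filter, Finset.mem_Icc] at ha' ⊢
    obtain ⟨⟨ha1, ha2⟩, hgcd⟩ := ha'
    refine ⟨⟨Nat.one_le_iff_ne_zero.2 (Nat.mul_pos hd0 ha1).ne', ?_⟩, ?_⟩
    · rw [Nat.le_div_iff_mul_le hk]
      calc d * a' * k = a' * k * d := by ring
        _ ≤ b / d * d := Nat.mul_le_mul_right d ((Nat.le_div_iff_mul_le hk).1 ha2)
        _ ≤ b := Nat.div_mul_le_self b d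
    · conv_lhs => rw [hb']
      rw [Nat.gcd_mul_left, hgcd, mul_one]
  · rintro a ha
    simp only [Finset.mem_filter, Finset.mem_Icc] at ha ⊢
    obtain ⟨⟨ha1, ha2⟩, hgcd⟩ := ha
    have hda : d ∣ a := hgcd ▸ Nat.gcd_dvd_left a b
    refine ⟨⟨(Nat.one_le_div_iff hd0).2 (Nat.le_of_dvd ha1 hda), ?_⟩, ?_⟩
    · rw [Nat.le_div_iff_mul_le hk, Nat.le_div_iff_mul_le hd0]
      calc a / d * k * d = a / d * d * k := by ring
        _ = a * k := by rw [Nat.div_mul_cancel hda]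
        _ ≤ b := (Nat.le_div_iff_mul_le hk).1 ha2
    · subst hgcd
      exact Nat.coprime_div_gcd_div_gcd (Nat.pos_of_dvd_of_pos (Nat.gcd_dvd_right a b) hb)
  · intro a' _
    exact Nat.mul_div_cancel_left a' hd0
  · intro a ha
    simp only [Finset.mem_filter, Finset.mem_Icc] at ha
    exact Nat.mul_div_cancel' (ha.2 ▸ Nat.gcd_dvd_left a b)

lemma tcount_eq (k : ℕ) (hk : 0 < k) (b : ℕ) (hb : 0 < b) :
    (tcount k b : ℤ) = ∑ d ∈ b.divisors, (μ d : ℤ) * ((b / d / k : ℕ) : ℤ) := by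
  have H := (ArithmeticFunction.sum_eq_iff_sum_smul_moebius_eq
      (f := fun i => (tcount k i : ℤ)) (g := fun n => ((n / k : ℕ) : ℤ))).mp
      (fun n hn => by exact_mod_cast congrArg (Nat.cast : ℕ → ℤ) (sum_tcount k hk n hn))
      b hb
  rw [← H, Nat.sum_divisorsAntidiagonal (fun d m => (μ d : ℤ) • ((m / k : ℕ) : ℤ))]
  simp [smul_eq_mul]

lemma swap_div (x : ℕ) (f : ℕ → ℕ → ℤ) :
    ∑ b ∈ Finset.Icc 1 x, ∑ d ∈ b.divisors, f d (b / d) =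
      ∑ d ∈ Finset.Icc 1 x, ∑ n ∈ Finset.Icc 1 (x / d), f d n := by
  rw [Finset.sum_sigma', Finset.sum_sigma']
  apply Finset.sum_nbij' (fun p => (⟨p.2, p.1 / p.2⟩ : Σ _ : ℕ, ℕ))
    (fun p => (⟨p.1 * p.2, p.1⟩ : Σ _ : ℕ, ℕ))
  · rintro ⟨b, d⟩ h
    simp only [Finset.mem_sigma, Finset.mem_Icc, Nat.mem_divisors] at h ⊢
    obtain ⟨⟨hb1, hb2⟩, hdvd, -⟩ := h
    have hd0 : 0 < d := Nat.pos_of_dvd_of_pos hdvd hb1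
    refine ⟨⟨hd0, le_trans (Nat.le_of_dvd hb1 hdvd) hb2⟩,
      (Nat.one_le_div_iff hd0).2 (Nat.le_of_dvd hb1 hdvd), Nat.div_le_div_right hb2⟩
  · rintro ⟨d, n⟩ h
    simp only [Finset.mem_sigma, Finset.mem_Icc, Nat.mem_divisors] at h ⊢
    obtain ⟨⟨hd1, hd2⟩, hn1, hn2⟩ := h
    have hdn : d * n ≤ x := by
      calc d * n = n * d := mul_comm _ _
        _ ≤ x / d * d := Nat.mul_le_mul_right d hn2
        _ ≤ x := Nat.div_mul_le_self x d
    exact ⟨⟨Nat.mul_pos hd1 hn1, hdn⟩, dvd_mul_right d n, (Nat.mul_pos hd1 hn1).ne'⟩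
  · rintro ⟨b, d⟩ h
    simp only [Finset.mem_sigma, Finset.mem_Icc, Nat.mem_divisors] at h
    obtain ⟨⟨hb1, -⟩, hdvd, -⟩ := h
    simp [Nat.mul_div_cancel' hdvd]
  · rintro ⟨d, n⟩ h
    simp only [Finset.mem_sigma, Finset.mem_Icc] at h
    obtain ⟨⟨hd1, -⟩, -, -⟩ := h
    simp [Nat.mul_div_cancel_left n hd1]
  · rintro ⟨b, d⟩ _
    rfl

lemma farey_eq (x k : ℕ) (hx : 0 < x) (hk : 0 < k) :
    (fareyCount x (1 / (k : ℝ)) : ℤ) =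
      ∑ n ∈ Finset.Icc 1 x, Mertens (x / n) * ((n / k : ℕ) : ℤ) := by
  have hkR : (0 : ℝ) < (k : ℝ) := by exact_mod_cast hk
  -- Step 1: farey side as sum of tcounts
  have step1 : fareyCount x (1 / (k : ℝ)) = ∑ b ∈ Finset.Icc 1 x, tcount k b := by
    unfold fareyCount
    rw [Finset.card_filter, Finset.sum_product_right]
    apply Finset.sum_congr rfl
    intro b hb
    rw [Finset.mem_Icc] at hb
    rw [tcount, Finset.card_filter]
    rw [← Finset.sum_filter, ← Finset.sum_filter]
    congr 1
    ext a
    simp only [Finset.mem_filter, Finset.mem_Icc]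
    have key : ((a : ℝ) ≤ 1 / (k : ℝ) * (b : ℝ)) ↔ a * k ≤ b := by
      rw [one_div, inv_mul_eq_div, le_div_iff₀ hkR]
      exact_mod_cast Iff.rfl
    constructor
    · rintro ⟨⟨h1, h2⟩, hab, hg, hr⟩
      exact ⟨⟨h1, (Nat.le_div_iff_mul_le hk).2 (key.1 hr)⟩, hg⟩
    · rintro ⟨⟨h1, h2⟩, hg⟩
      have hak : a * k ≤ b := (Nat.le_div_iff_mul_le hk).1 h2
      have hab : a ≤ b := le_trans (Nat.le_mul_of_pos_right a hk) hak
      exact ⟨⟨h1, le_trans hab hb.2⟩, hab, hg, key.2 hak⟩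
  rw [step1, Nat.cast_sum]
  rw [Finset.sum_congr rfl (fun b hb => tcount_eq k hk b (Finset.mem_Icc.1 hb).1)]
  rw [swap_div x (fun d n => (μ d : ℤ) * ((n / k : ℕ) : ℤ))]
  -- Mertens side
  have hM : ∑ n ∈ Finset.Icc 1 x, Mertens (x / n) * ((n / k : ℕ) : ℤ)
      = ∑ d ∈ Finset.Icc 1 x, ∑ n ∈ Finset.Icc 1 (x / d), (μ d : ℤ) * ((n / k : ℕ) : ℤ) := by
    simp only [Mertens, Finset.sum_mul]
    apply Finset.sum_comm'
    intro n d
    simp only [Finset.mem_Icc]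
    constructor
    · rintro ⟨⟨hn1, hn2⟩, hd1, hd2⟩
      have hdn : d * n ≤ x := (Nat.le_div_iff_mul_le hn1).1 hd2
      refine ⟨⟨hn1, ?_⟩, hd1, le_trans (Nat.le_mul_of_pos_right d hn1) hdn⟩
      rw [Nat.le_div_iff_mul_le hd1, mul_comm]; exact hdn
    · rintro ⟨⟨hn1, hn2⟩, hd1, hd2⟩
      have hnd : n * d ≤ x := (Nat.le_div_iff_mul_le hd1).1 hn2
      refine ⟨⟨hn1, le_trans (Nat.le_mul_of_pos_right n hd1) hnd⟩, hd1, ?_⟩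
      rw [Nat.le_div_iff_mul_le hn1, mul_comm]; exact hnd
  rw [hM]

theorem stmt_14 (x : ℕ) (hx : 0 < x) :
    ∑ n ∈ Finset.Icc 1 x, Mertens (x / n) * (((n / 2 : ℕ) : ℤ) - 2 * ((n / 4 : ℕ) : ℤ)) =
      -- `n_x - m_x` where `m_x = fareyCount x (1/4)` and
      -- `n_x = fareyCount x (1/2) - fareyCount x (1/4)`
      ((fareyCount x (1 / 2) : ℤ) - (fareyCount x (1 / 4) : ℤ)) -
        (fareyCount x (1 / 4) : ℤ) := by
  have h2 := farey_eq x 2 hx (by norm_num)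
  have h4 := farey_eq x 4 hx (by norm_num)
  have e2 : (1 / ((2 : ℕ) : ℝ)) = 1 / 2 := by norm_num
  have e4 : (1 / ((4 : ℕ) : ℝ)) = 1 / 4 := by norm_num
  rw [e2] at h2; rw [e4] at h4
  have expand : ∀ n ∈ Finset.Icc 1 x,
      Mertens (x / n) * (((n / 2 : ℕ) : ℤ) - 2 * ((n / 4 : ℕ) : ℤ)) =
      Mertens (x / n) * ((n / 2 : ℕ) : ℤ) - 2 * (Mertens (x / n) * ((n / 4 : ℕ) : ℤ)) := by
    intro n _; ring
  rw [Finset.sum_congr rfl expand, Finset.sum_sub_distrib, ← Finset.mul_sum, ← h2, ← h4]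
  ring
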